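/- Let n be an odd perfect number whose prime factorization is n = p₁^{α₁} ⋯ p_k^{α_k} · q^{β}, where p₁, …, p_k, q are distinct odd primes, each α_i is even, β is odd, and q ≡ 5 (mod 8). Then at least one of the primes p₁, …, p_k is not a quadratic residue modulo q, i.e., there exists a prime p dividing n with p ≠ q and Legendre symbol (p/q) = −1. -/

import Mathlib

open ArithmeticFunction Finset
open scoped ArithmeticFunction.sigma

theorem aux_extract (q : ℕ) [Fact q.Prime] :
    ∀ t : ℕ, ¬ q ∣ t → legendreSym q t = -1 →
      ∃ r : ℕ, r.Prime ∧ r ∣ t ∧ legendreSym q r = -1 := by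
  intro t
  induction t using Nat.strong_induction_on with
  | _ t ih =>
    intro hqt hL
    rcases Nat.eq_zero_or_pos t with rfl | ht0
    · exact absurd (dvd_zero q) hqt
    rcases eq_or_ne t 1 with rfl | ht1
    · simp [legendreSym.at_one] at hL
    set r := t.minFac with hr
    have hrp : r.Prime := Nat.minFac_prime ht1
    have hrd : r ∣ t := Nat.minFac_dvd t
    have hqr : ¬ q ∣ r := by
      intro h
      exact hqt (((Nat.prime_dvd_prime_iff_eq Fact.out hrp).mp h ▸ hrd))
    have hr0 : ((r : ℤ) : ZMod q) ≠ 0 := by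
      rw [Int.cast_natCast, Ne, ZMod.natCast_eq_zero_iff]
      exact hqr
    rcases (legendreSym.eq_one_or_neg_one q hr0) with h1 | h1
    · have htr : t = r * (t / r) := (Nat.mul_div_cancel' hrd).symm
      have hmul : legendreSym q t = legendreSym q r * legendreSym q (t / r) := by
        conv_lhs => rw [htr]
        push_cast
        exact legendreSym.mul q r (t / r)
      rw [hmul, h1, one_mul] at hL
      have hlt : t / r < t := Nat.div_lt_self ht0 hrp.one_lt
      have hqtr : ¬ q ∣ t / r := fun h => hqt (h.trans (Nat.div_dvd_of_dvd hrd))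
      obtain ⟨r', hr'p, hr'd, hr'L⟩ := ih _ hlt hqtr hL
      exact ⟨r', hr'p, hr'd.trans (Nat.div_dvd_of_dvd hrd), hr'L⟩
    · exact ⟨r, hrp, hrd, h1⟩

/-- If `n` is an odd perfect number with prime factorization
`n = p₁^{α₁} ⋯ p_k^{α_k} · q^β`, where the `pᵢ` and `q` are distinct odd primes,
each `αᵢ` is even, `β` is odd and `q ≡ 5 [MOD 8]`, then some prime `p` dividing `n`
with `p ≠ q` is a quadratic non-residue modulo `q`. -/
theorem stmt1 (n k : ℕ) (p : Fin k → ℕ) (α : Fin k → ℕ) (q β : ℕ)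
    (hn_odd : Odd n) (hn_perf : n.Perfect)
    (hp_prime : ∀ i, (p i).Prime) (hp_odd : ∀ i, Odd (p i))
    (hp_inj : Function.Injective p)
    (hq_prime : q.Prime) (hq_odd : Odd q) (hpq : ∀ i, p i ≠ q)
    (hα_even : ∀ i, Even (α i)) (hα_pos : ∀ i, 0 < α i)
    (hβ_odd : Odd β)
    (hq5 : q % 8 = 5)
    (hfac : n = (∏ i, p i ^ α i) * q ^ β) :
    ∃ r : ℕ, r.Prime ∧ r ∣ n ∧ r ≠ q ∧ @legendreSym q ⟨hq_prime⟩ r = -1 := by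
  haveI : Fact q.Prime := ⟨hq_prime⟩
  set M := ∏ i, p i ^ α i with hM
  have hn_pos : 0 < n := hn_odd.pos
  have hq2 : q ≠ 2 := by intro h; omega
  -- coprimality
  have hqMcop : Nat.Coprime q M := by
    apply Nat.Coprime.prod_right
    intro i _
    exact Nat.Coprime.pow_right _ ((Nat.coprime_primes hq_prime (hp_prime i)).mpr (hpq i).symm)
  have hqM : ¬ q ∣ M := (Nat.Prime.coprime_iff_not_dvd hq_prime).mp hqMcop
  have hcop : Nat.Coprime M (q ^ β) := (hqMcop.symm).pow_right β
  -- sigma equation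
  have hσn : σ 1 n = 2 * n := by
    rw [sigma_one_apply]
    exact (Nat.perfect_iff_sum_divisors_eq_two_mul hn_pos).mp hn_perf
  have hσmul : σ 1 M * σ 1 (q ^ β) = 2 * (M * q ^ β) := by
    rw [← isMultiplicative_sigma.map_mul_of_coprime hcop, ← hfac, hσn, hfac]
  -- σ(q^β) ≡ 1 mod q
  have hS1 : ((σ 1 (q ^ β) : ℕ) : ZMod q) = 1 := by
    rw [sigma_one_apply_prime_pow hq_prime]
    push_cast
    rw [ZMod.natCast_self]
    rw [Finset.sum_eq_single 0 (fun b _ hb => zero_pow hb)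
      (fun h => absurd (Finset.mem_range.mpr (Nat.succ_pos β)) h)]
    exact pow_zero 0
  have hqS : ¬ q ∣ σ 1 (q ^ β) := by
    rw [← ZMod.natCast_eq_zero_iff, hS1]
    exact one_ne_zero
  -- q^β ∣ σ M
  have hdvd : q ^ β ∣ σ 1 M := by
    have h1 : q ^ β ∣ σ 1 M * σ 1 (q ^ β) := by
      rw [hσmul]; exact Dvd.dvd.mul_left (dvd_mul_left _ _) 2
    exact (Nat.Coprime.dvd_of_dvd_mul_right
      ((Nat.Coprime.pow_left β ((Nat.Prime.coprime_iff_not_dvd hq_prime).mpr hqS))) h1)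
  obtain ⟨t, ht⟩ := hdvd
  have hqβpos : 0 < q ^ β := pow_pos hq_prime.pos β
  have key : t * σ 1 (q ^ β) = 2 * M := by
    have h2 : q ^ β * (t * σ 1 (q ^ β)) = q ^ β * (2 * M) := by
      rw [← mul_assoc, ← ht, hσmul]; ring
    exact Nat.eq_of_mul_eq_mul_left hqβpos h2
  -- parity
  have hSeven : 2 ∣ σ 1 (q ^ β) := by
    rw [← ZMod.natCast_eq_zero_iff]
    rw [sigma_one_apply_prime_pow hq_prime]
    push_cast
    have hq1 : (q : ZMod 2) = 1 := by
      have h : ((q % 2 : ℕ) : ZMod 2) = (q : ZMod 2) := ZMod.natCast_mod q 2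
      rw [← h, Nat.odd_iff.mp hq_odd, Nat.cast_one]
    rw [hq1]
    simp only [one_pow, Finset.sum_const, Finset.card_range, nsmul_eq_mul, mul_one]
    obtain ⟨c, hc⟩ := hβ_odd
    rw [show β + 1 = 2 * (c + 1) by omega]
    push_cast
    rw [show (2 : ZMod 2) = 0 by decide]
    ring
  have hModd : ¬ 2 ∣ σ 1 M := by
    intro h2M
    obtain ⟨a, ha⟩ := h2M
    obtain ⟨b, hb⟩ := hSeven
    have h4 : 2 * (M * q ^ β) = 2 * (2 * (a * b)) := by rw [← hσmul, ha, hb]; ring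
    have h5 : M * q ^ β = 2 * (a * b) := by omega
    have h6 : 2 ∣ n := ⟨a * b, by rw [hfac, h5]⟩
    exact (Nat.not_even_iff_odd.mpr hn_odd) (even_iff_two_dvd.mpr h6)
  have htodd : ¬ 2 ∣ t := fun h => hModd (ht ▸ h.mul_left _)
  have hqt : ¬ q ∣ t := by
    intro h
    have : q ∣ 2 * M := key ▸ (h.mul_right _)
    rcases (Nat.Prime.dvd_mul hq_prime).mp this with h' | h'
    · have := Nat.le_of_dvd two_pos h'; omega
    · exact hqM h'
  -- Legendre symbol computation
  have hLS : legendreSym q (σ 1 (q ^ β)) = 1 := by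
    rw [legendreSym.eq_one_iff]
    · rw [Int.cast_natCast, hS1]; exact IsSquare.one
    · rw [Int.cast_natCast, hS1]; exact one_ne_zero
  have hL2 : legendreSym q 2 = -1 := by
    rw [legendreSym.eq_neg_one_iff]
    intro hsq
    have : ((2 : ℤ) : ZMod q) = ((2 : ℕ) : ZMod q) := by push_cast; ring
    rw [this] at hsq
    have := (ZMod.exists_sq_eq_two_iff hq2).mp (by exact_mod_cast hsq)
    omega
  set w := ∏ i, p i ^ (α i / 2) with hw
  have hMsq : M = w ^ 2 := by
    rw [hw, ← Finset.prod_pow]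
    apply Finset.prod_congr rfl
    intro i _
    rw [← pow_mul]
    congr 1
    obtain ⟨c, hc⟩ := hα_even i
    omega
  have hqw : ¬ q ∣ w := fun h => hqM (hMsq ▸ (h.trans (dvd_pow_self w two_ne_zero)))
  have hLM : legendreSym q (M : ℤ) = 1 := by
    have hw0 : ((w : ℤ) : ZMod q) ≠ 0 := by
      rw [Int.cast_natCast, Ne, ZMod.natCast_eq_zero_iff]; exact hqw
    rw [hMsq]
    push_cast
    exact legendreSym.sq_one' q hw0
  have hLt : legendreSym q t = -1 := by
    have h1 : legendreSym q ((t * σ 1 (q ^ β) : ℕ) : ℤ) = legendreSym q ((2 * M : ℕ) : ℤ) := by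
      rw [key]
    push_cast at h1
    rw [legendreSym.mul, legendreSym.mul, hLS, hLM, hL2, mul_one] at h1
    simpa using h1
  obtain ⟨r, hrp, hrt, hrL⟩ := aux_extract q t hqt hLt
  refine ⟨r, hrp, ?_, ?_, hrL⟩
  · -- r ∣ n
    have hr2n : r ∣ 2 * n := by
      have h1 : t ∣ σ 1 M := Dvd.intro_left _ ht.symm
      have h2 : σ 1 M ∣ 2 * n := by
        rw [show 2 * n = σ 1 M * σ 1 (q ^ β) by rw [hσmul, ← hfac]]
        exact dvd_mul_right _ _
      exact hrt.trans (h1.trans h2)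
    rcases (Nat.Prime.dvd_mul hrp).mp hr2n with h' | h'
    · exfalso
      have : r = 2 := (Nat.prime_dvd_prime_iff_eq hrp Nat.prime_two).mp h'
      exact htodd (this ▸ hrt)
    · exact h'
  · intro hrq
    exact hqt (hrq ▸ hrt)
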